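/- For every function f : ω → ω, the statement 'a ⊆* L_f' for a ⊆ ω×ω is characterized by: if g : dom → ω is a function with graph contained in a, where dom = {m : ∃n (m,n) ∈ a}, and a ∩ L_f is finite, then g(n) > f(n) for all but finitely many n ∈ dom. Consequently, the countably co-generated nonprincipal ideals of P(ω)/fin are, up to isomorphism, exactly the ideals of P(ω×ω)/fin generated by the sets L_f = {(m,n) : n ≤ f(m)} for f ∈ ω^ω, and 𝔡 equals the minimum cardinality of a cofinal subset of any such ideal. -/

import Mathlib

open scoped symmDiff

instance booleanRingQuotient {R : Type*} [BooleanRing R] (I : Ideal R) :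
    BooleanRing (R ⧸ I) where
  isIdempotentElem a := by
    obtain ⟨x, rfl⟩ := Ideal.Quotient.mk_surjective a
    show _ * _ = _
    rw [← map_mul]; exact congrArg _ (BooleanRing.mul_self x)

/-- The ideal of finite sets, as a ring ideal of the Boolean ring `AsBoolRing (Set α)`. -/
def finSetIdeal (α : Type*) : Ideal (AsBoolRing (Set α)) where
  carrier := {s | (ofBoolRing s).Finite}
  zero_mem' := by simp [ofBoolRing_zero]
  add_mem' := by
    intro a b ha hb
    have h : (ofBoolRing (a + b) : Set α) = ofBoolRing a ∆ ofBoolRing b := ofBoolRing_add a b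
    show (ofBoolRing (a + b)).Finite
    rw [h]
    refine Set.Finite.subset (Set.Finite.union ha hb) ?_
    rintro x (h1 | h1)
    · exact Or.inl h1.1
    · exact Or.inr h1.1
  smul_mem' := by
    intro c x hx
    have h : (ofBoolRing (c * x) : Set α) = ofBoolRing c ⊓ ofBoolRing x := ofBoolRing_mul c x
    show (ofBoolRing (c • x)).Finite
    rw [smul_eq_mul, h]
    exact Set.Finite.subset hx Set.inter_subset_right

/-- The Boolean algebra `P(α)/fin`. -/
abbrev PowFin (α : Type*) : Type _ := AsBoolAlg ((AsBoolRing (Set α)) ⧸ finSetIdeal α)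

/-- The ideal co-generated by `S`: all elements disjoint from every member of `S`. -/
def cogenSet {B : Type*} [BooleanAlgebra B] (S : Set B) : Set B :=
  {b | ∀ s ∈ S, b ⊓ s = ⊥}

/-- `I` is a countably co-generated ideal: it is co-generated by some countable set,
but by no finite set. -/
def CtblyCogen {B : Type*} [BooleanAlgebra B] (I : Set B) : Prop :=
  (∃ S : Set B, S.Countable ∧ I = cogenSet S) ∧ ¬ ∃ F : Finset B, I = cogenSet ↑F

/-- The dominating number `𝔡`: the least cardinality of a family of functions that
eventually dominates every function `ℕ → ℕ`. -/
noncomputable def dNum : Cardinal :=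
  sInf {κ | ∃ D : Set (ℕ → ℕ), Cardinal.mk D = κ ∧
    ∀ g : ℕ → ℕ, ∃ d ∈ D, ∀ᶠ n in Filter.atTop, g n < d n}

/-- Van Douwen's cardinal `𝔡₂`: the minimum of `|A| + |D|` over pairs with
`A ⊆ [ω]^ω`, `D ⊆ ω^ω`, such that `D` dominates on `A`. -/
noncomputable def d2Num : Cardinal :=
  sInf {κ | ∃ (A : Set (Set ℕ)) (D : Set (ℕ → ℕ)), (∀ a ∈ A, a.Infinite) ∧
    Cardinal.mk A + Cardinal.mk D = κ ∧
    ∀ g : ℕ → ℕ, ∃ d ∈ D, ∃ a ∈ A, ∀ n ∈ a, g n < d n}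

/-- The equivalence class of `s ⊆ α` in `P(α)/fin`. -/
def clsFin {α : Type*} (s : Set α) : PowFin α :=
  toBoolAlg (Ideal.Quotient.mk (finSetIdeal α) (toBoolRing s))

/-- `L_f = {(m,n) : n ≤ f(m)}`, the region below the graph of `f`. -/
def Lf (f : ℕ → ℕ) : Set (ℕ × ℕ) := {p | p.2 ≤ f p.1}

/-- The ideal of `P(ω×ω)/fin` generated by the sets `L_f`, `f ∈ ω^ω`. -/
def LIdeal : Set (PowFin (ℕ × ℕ)) := {x | ∃ f : ℕ → ℕ, x ≤ clsFin (Lf f)}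

lemma mem_finSetIdeal {α : Type*} (s : Set α) :
    toBoolRing s ∈ finSetIdeal α ↔ s.Finite := Iff.rfl

lemma clsFin_surjective {α : Type*} : Function.Surjective (clsFin (α := α)) := by
  intro x
  obtain ⟨y, hy⟩ := Ideal.Quotient.mk_surjective (ofBoolAlg x)
  exact ⟨ofBoolRing y, by simp [clsFin, hy]⟩

lemma clsFin_inf {α : Type*} (s t : Set α) : clsFin (s ∩ t) = clsFin s ⊓ clsFin t := by
  rw [clsFin, clsFin, clsFin, ← toBoolAlg_mul, ← map_mul]
  rfl

lemma toBoolRing_set_mul {α : Type*} (s t : Set α) :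
    (toBoolRing s * toBoolRing t : AsBoolRing (Set α)) = toBoolRing (s ∩ t) :=
  (toBoolRing_inf s t).symm

lemma clsFin_eq_iff {α : Type*} (s t : Set α) : clsFin s = clsFin t ↔ (s ∆ t).Finite := by
  rw [clsFin, clsFin, toBoolAlg_inj, Ideal.Quotient.eq, BooleanRing.sub_eq_add,
    ← toBoolRing_symmDiff]
  exact Iff.rfl

lemma clsFin_le_iff {α : Type*} (s t : Set α) : clsFin s ≤ clsFin t ↔ (s \ t).Finite := by
  rw [clsFin, clsFin, ← ofBoolAlg_mul_ofBoolAlg_eq_left_iff]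
  simp only [ofBoolAlg_toBoolAlg, ← map_mul, toBoolRing_set_mul]
  rw [show Ideal.Quotient.mk (finSetIdeal α) (toBoolRing (s ∩ t))
      = Ideal.Quotient.mk (finSetIdeal α) (toBoolRing s) ↔ clsFin (s ∩ t) = clsFin s from
      (toBoolAlg_inj).symm, clsFin_eq_iff]
  have : (s ∩ t) ∆ s = s \ t := by
    rw [Set.symmDiff_def]
    ext x; simp [Set.mem_diff]; tauto
  rw [this]

lemma clsFin_bot_iff {α : Type*} (s : Set α) : clsFin s = ⊥ ↔ s.Finite := by
  have hb : (⊥ : PowFin α) = clsFin ∅ := by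
    rw [clsFin, show (toBoolRing (∅ : Set α)) = (0 : AsBoolRing (Set α)) from toBoolRing_bot,
      map_zero, toBoolAlg_zero]
  rw [hb, clsFin_eq_iff, ← Set.bot_eq_empty, symmDiff_bot]

lemma clsFin_inter_bot_iff {α : Type*} (s t : Set α) :
    clsFin s ⊓ clsFin t = ⊥ ↔ (s ∩ t).Finite := by
  rw [← clsFin_inf, clsFin_bot_iff]

/-- the `m`-th column -/
def col (m : ℕ) : Set (ℕ × ℕ) := {p | p.1 = m}

lemma part1 : ∀ (f : ℕ → ℕ) (a : Set (ℕ × ℕ)) (g : ℕ → ℕ),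
      (∀ m ∈ {m | ∃ n, (m, n) ∈ a}, (m, g m) ∈ a) → (a ∩ Lf f).Finite →
      {m ∈ {m | ∃ n, (m, n) ∈ a} | ¬ f m < g m}.Finite := by
  intro f a g hg hfin
  apply Set.Finite.of_finite_image (f := fun m => (m, g m))
  · refine hfin.subset ?_
    rintro p ⟨m, ⟨hm, hfm⟩, rfl⟩
    exact ⟨hg m hm, by simpa [Lf] using Nat.not_lt.mp hfm⟩
  · exact fun x _ y _ h => (Prod.mk.injEq _ _ _ _ ▸ h).1

lemma diff_Lf_finite_iff (X : Set (ℕ × ℕ)) :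
    (∃ f : ℕ → ℕ, (X \ Lf f).Finite) ↔ ∀ m, (X ∩ col m).Finite := by
  constructor
  · rintro ⟨f, hf⟩ m
    have h2 : (Lf f ∩ col m).Finite := by
      refine ((Set.finite_Iic (f m)).image (fun n => (m, n))).subset ?_
      rintro ⟨p1, p2⟩ ⟨hp1, hp2⟩
      simp only [col, Set.mem_setOf_eq] at hp2
      subst hp2
      exact ⟨p2, hp1, rfl⟩
    refine (hf.union h2).subset ?_
    intro p hp
    by_cases h : p ∈ Lf f
    · exact Or.inr ⟨h, hp.2⟩
    · exact Or.inl ⟨hp.1, h⟩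
  · intro h
    refine ⟨fun m => sSup {n | (m, n) ∈ X}, ?_⟩
    have : X \ Lf (fun m => sSup {n | (m, n) ∈ X}) = ∅ := by
      ext ⟨p1, p2⟩
      simp only [Set.mem_diff, Set.mem_empty_iff_false, iff_false, not_and, Lf,
        Set.mem_setOf_eq, not_not]
      intro hp
      have hfin : {n | (p1, n) ∈ X}.Finite := by
        refine Set.Finite.of_finite_image (f := fun n => (p1, n)) ((h p1).subset ?_) ?_
        · rintro q ⟨n, hn, rfl⟩; exact ⟨hn, rfl⟩
        · exact fun x _ y _ hxy => (Prod.mk.injEq _ _ _ _ ▸ hxy).2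
      exact le_csSup hfin.bddAbove hp
    rw [this]; exact Set.finite_empty

lemma mem_LIdeal_iff (X : Set (ℕ × ℕ)) :
    clsFin X ∈ LIdeal ↔ ∀ m, (X ∩ col m).Finite := by
  rw [← diff_Lf_finite_iff]
  constructor
  · rintro ⟨f, hf⟩; exact ⟨f, (clsFin_le_iff _ _).mp hf⟩
  · rintro ⟨f, hf⟩; exact ⟨f, (clsFin_le_iff _ _).mpr hf⟩

lemma ideal_of_cogen_finset {B : Type*} [BooleanAlgebra B] (F : Finset B) :
    cogenSet (↑F : Set B) = {b | b ≤ (F.sup id)ᶜ} := by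
  ext b
  simp only [cogenSet, Set.mem_setOf_eq, le_compl_iff_disjoint_right, Finset.disjoint_sup_right,
    ← disjoint_iff]
  simp [Finset.mem_coe]

lemma Lf_succ_not_le (f : ℕ → ℕ) :
    ¬ clsFin (Lf (fun m => f m + 1)) ≤ clsFin (Lf f) := by
  rw [clsFin_le_iff]
  intro h
  refine (Set.infinite_of_injective_forall_mem (f := fun m : ℕ => (m, f m + 1)) ?_ ?_) h
  · exact fun x y hxy => (Prod.mk.injEq _ _ _ _ ▸ hxy).1
  · intro m
    constructor
    · simp [Lf]
    · simp [Lf]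

lemma ctblyCogen_LIdeal : CtblyCogen LIdeal := by
  constructor
  · refine ⟨Set.range (fun m => clsFin (col m)), Set.countable_range _, ?_⟩
    ext x
    obtain ⟨X, rfl⟩ := clsFin_surjective x
    rw [mem_LIdeal_iff]
    simp only [cogenSet, Set.mem_setOf_eq, Set.forall_mem_range]
    constructor
    · intro h m; rw [← clsFin_inf, clsFin_bot_iff]; exact h m
    · intro h m; rw [← clsFin_bot_iff, clsFin_inf]; exact h m
  · rintro ⟨F, hF⟩
    rw [ideal_of_cogen_finset] at hF
    have hc : (F.sup id)ᶜ ∈ LIdeal := by rw [hF]; exact Set.mem_setOf_eq ▸ le_refl _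
    obtain ⟨f, hf⟩ := hc
    have h1 : clsFin (Lf (fun m => f m + 1)) ∈ LIdeal := ⟨_, le_refl _⟩
    rw [hF] at h1
    exact Lf_succ_not_le f (le_trans h1 hf)

/-- A bijection induces a ring equivalence of the Boolean rings of sets. -/
def setRingEquiv {α β : Type*} (e : α ≃ β) : AsBoolRing (Set α) ≃+* AsBoolRing (Set β) where
  toFun s := toBoolRing (e '' ofBoolRing s)
  invFun s := toBoolRing (e.symm '' ofBoolRing s)
  left_inv s := by simp [Set.image_image]
  right_inv s := by simp [Set.image_image]
  map_mul' a b := by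
    have : (e '' (ofBoolRing (a * b) : Set α)) = (e '' ofBoolRing a) ∩ (e '' ofBoolRing b) := by
      rw [ofBoolRing_mul]
      exact Set.image_inter e.injective
    rw [this, ← toBoolRing_inf]
    rfl
  map_add' a b := by
    have : (e '' (ofBoolRing (a + b) : Set α)) = (e '' ofBoolRing a) ∆ (e '' ofBoolRing b) := by
      rw [ofBoolRing_add]
      exact Set.image_symmDiff e.injective _ _
    rw [this, ← toBoolRing_symmDiff]

lemma setRingEquiv_map_ideal {α β : Type*} (e : α ≃ β) :
    finSetIdeal β = (finSetIdeal α).map (setRingEquiv e : AsBoolRing (Set α) →+* AsBoolRing (Set β)) := by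
  apply le_antisymm
  · intro x hx
    have : x = setRingEquiv e (toBoolRing (e.symm '' ofBoolRing x)) := by
      show x = toBoolRing (e '' (ofBoolRing (toBoolRing (e.symm '' ofBoolRing x))))
      simp [Set.image_image]
    rw [this]
    refine Ideal.mem_map_of_mem _ ?_
    show ((ofBoolRing (toBoolRing (e.symm '' (ofBoolRing x : Set β)))) : Set α).Finite
    rw [ofBoolRing_toBoolRing]
    exact Set.Finite.image _ hx
  · rw [Ideal.map_le_iff_le_comap]
    intro x hx
    show ((ofBoolRing (toBoolRing (e '' (ofBoolRing x : Set α)))) : Set β).Finite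
    rw [ofBoolRing_toBoolRing]
    exact Set.Finite.image _ hx

/-- The induced ring equivalence on the quotients. -/
noncomputable def powFinRingEquiv {α β : Type*} (e : α ≃ β) :
    (AsBoolRing (Set α) ⧸ finSetIdeal α) ≃+* (AsBoolRing (Set β) ⧸ finSetIdeal β) :=
  Ideal.quotientEquiv _ _ (setRingEquiv e) (setRingEquiv_map_ideal e)

/-- The induced order isomorphism `P(α)/fin ≃o P(β)/fin`. -/
noncomputable def powFinOrderIso {α β : Type*} (e : α ≃ β) : PowFin α ≃o PowFin β where
  toFun x := toBoolAlg (powFinRingEquiv e (ofBoolAlg x))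
  invFun y := toBoolAlg ((powFinRingEquiv e).symm (ofBoolAlg y))
  left_inv x := by simp
  right_inv y := by simp
  map_rel_iff' := by
    intro x y
    simp only [Equiv.coe_fn_mk]
    rw [← ofBoolAlg_mul_ofBoolAlg_eq_left_iff, ← ofBoolAlg_mul_ofBoolAlg_eq_left_iff (a := x)]
    simp only [ofBoolAlg_toBoolAlg, ← map_mul]
    exact ⟨fun h => by simpa using congrArg (powFinRingEquiv e).symm h,
      fun h => congrArg _ h⟩

lemma powFinOrderIso_clsFin {α β : Type*} (e : α ≃ β) (s : Set α) :
    powFinOrderIso e (clsFin s) = clsFin (e '' s) := by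
  show toBoolAlg (powFinRingEquiv e (ofBoolAlg (toBoolAlg (Ideal.Quotient.mk (finSetIdeal α) (toBoolRing s))))) = _
  rw [ofBoolAlg_toBoolAlg]
  rw [clsFin, toBoolAlg_inj, powFinRingEquiv, Ideal.quotientEquiv_mk]
  exact congrArg _ (by
    show toBoolRing (e '' (ofBoolRing (toBoolRing s))) = _
    rw [ofBoolRing_toBoolRing])

open Classical in
lemma cogen_exists_disjoint_family {I : Set (PowFin ℕ)} (hI : CtblyCogen I) :
    ∃ A : ℕ → Set ℕ, (∀ n, (A n).Infinite) ∧ (∀ m n, m ≠ n → A m ∩ A n = ∅) ∧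
      ∀ X : Set ℕ, (clsFin X ∈ I ↔ ∀ n, (X ∩ A n).Finite) := by
  obtain ⟨⟨S, hSc, rfl⟩, hnf⟩ := hI
  -- S is nonempty
  have hSne : S.Nonempty := by
    rcases Set.eq_empty_or_nonempty S with h | h
    · exfalso
      apply hnf
      exact ⟨∅, by simp [h]⟩
    · exact h
  obtain ⟨s, rfl⟩ := Set.Countable.exists_eq_range hSc hSne
  choose B hB using fun n => clsFin_surjective (s n)
  -- membership via B
  have memB : ∀ X : Set ℕ, (clsFin X ∈ cogenSet (Set.range s) ↔ ∀ n, (X ∩ B n).Finite) := by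
    intro X
    simp only [cogenSet, Set.mem_setOf_eq, Set.forall_mem_range]
    constructor
    · intro h n
      have h2 := h n
      rw [← hB n, ← clsFin_inf, clsFin_bot_iff] at h2
      exact h2
    · intro h n
      rw [← hB n, ← clsFin_inf, clsFin_bot_iff]
      exact h n
  -- disjointify
  set A0 : ℕ → Set ℕ := fun n => B n \ ⋃ k ∈ Set.Iio n, B k with hA0
  have hA0sub : ∀ n, A0 n ⊆ B n := fun n => Set.diff_subset
  have hBsub : ∀ n, B n ⊆ ⋃ k ∈ Set.Iic n, A0 k := by
    intro n x hx
    have hex : ∃ k, x ∈ B k := ⟨n, hx⟩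
    have hk := Nat.find_spec hex
    have hkle : Nat.find hex ≤ n := Nat.find_le hx
    refine Set.mem_biUnion hkle ⟨hk, ?_⟩
    simp only [Set.mem_iUnion, not_exists, Set.mem_Iio]
    intro k hkn
    exact Nat.find_min hex hkn
  have hA0disj : ∀ m n, m ≠ n → A0 m ∩ A0 n = ∅ := by
    intro m n hmn
    rcases hmn.lt_or_gt with h | h
    · ext x
      simp only [Set.mem_inter_iff, Set.mem_empty_iff_false, iff_false, not_and]
      intro hxm hxn
      exact hxn.2 (Set.mem_biUnion h (hA0sub m hxm))
    · ext x
      simp only [Set.mem_inter_iff, Set.mem_empty_iff_false, iff_false, not_and]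
      intro hxm hxn
      exact hxm.2 (Set.mem_biUnion h (hA0sub n hxn))
  have memA0 : ∀ X : Set ℕ, (clsFin X ∈ cogenSet (Set.range s) ↔ ∀ n, (X ∩ A0 n).Finite) := by
    intro X
    rw [memB]
    constructor
    · exact fun h n => (h n).subset (Set.inter_subset_inter_right _ (hA0sub n))
    · intro h n
      have hsub : X ∩ B n ⊆ ⋃ k ∈ Set.Iic n, X ∩ A0 k := by
        intro x hx
        obtain ⟨u, hu⟩ := Set.mem_iUnion.mp (hBsub n hx.2)
        obtain ⟨hun, hxu⟩ := Set.mem_iUnion.mp hu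
        exact Set.mem_biUnion hun ⟨hx.1, hxu⟩
      exact ((Set.finite_Iic n).biUnion (fun k _ => h k)).subset hsub
  -- infinitely many infinite pieces
  have hMinf : {n | (A0 n).Infinite}.Infinite := by
    by_contra hMfin
    rw [Set.not_infinite] at hMfin
    apply hnf
    refine ⟨hMfin.toFinset.image (fun n => clsFin (A0 n)), ?_⟩
    ext x
    obtain ⟨X, rfl⟩ := clsFin_surjective x
    rw [memA0]
    simp only [cogenSet, Finset.coe_image, Set.forall_mem_image, Finset.mem_coe,
      Set.Finite.mem_toFinset, Set.mem_setOf_eq]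
    constructor
    · intro h n _
      rw [← clsFin_inf, clsFin_bot_iff]
      exact h n
    · intro h n
      by_cases hn : (A0 n).Infinite
      · have h2 := h hn
        rw [← clsFin_inf, clsFin_bot_iff] at h2
        exact h2
      · exact (Set.not_infinite.mp hn).subset Set.inter_subset_right
  haveI := hMinf.to_subtype
  obtain ⟨φ⟩ : Nonempty (ℕ ≃ {n | (A0 n).Infinite}) := nonempty_equiv_of_countable
  refine ⟨fun k => A0 (φ k), fun k => (φ k).2, ?_, ?_⟩
  · intro k l hkl
    exact hA0disj _ _ (fun hv => hkl (φ.injective (Subtype.ext hv)))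
  · intro X
    rw [memA0]
    constructor
    · exact fun h k => h _
    · intro h n
      by_cases hn : (A0 n).Infinite
      · have : n = ((φ (φ.symm ⟨n, hn⟩)) : ℕ) := by rw [Equiv.apply_symm_apply]
        rw [this]
        exact h _
      · exact (Set.not_infinite.mp hn).subset Set.inter_subset_right

open Classical in
lemma exists_equiv_to_cols (A : ℕ → Set ℕ) (hinf : ∀ n, (A n).Infinite)
    (hdisj : ∀ m n, m ≠ n → A m ∩ A n = ∅) :
    ∃ ψ : ℕ ≃ (ℕ × ℕ), ∀ X : Set ℕ,
      ((∀ n, (X ∩ A n).Finite) ↔ ∀ m, ((ψ '' X) ∩ col m).Finite) := by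
  set R : Set ℕ := {x | ∀ n, x ∉ A n} with hR
  set D : Set (ℕ × ℕ) := (fun r => (r, 0)) '' R with hD
  set g : ℕ → Option ℕ := fun x => if h : ∃ n, x ∈ A n then some h.choose else none with hg
  set h : ℕ × ℕ → Option ℕ := fun p => if p ∈ D then none else some p.1 with hh
  have gfib_some : ∀ n, {x | g x = some n} = A n := by
    intro n
    ext x
    simp only [Set.mem_setOf_eq, hg]
    constructor
    · intro hx
      by_cases hex : ∃ k, x ∈ A k
      · rw [dif_pos hex] at hx
        have := hex.choose_spec
        rwa [Option.some_inj.mp hx] at this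
      · rw [dif_neg hex] at hx; exact absurd hx (by simp)
    · intro hx
      have hex : ∃ k, x ∈ A k := ⟨n, hx⟩
      rw [dif_pos hex]
      congr 1
      by_contra hne
      have := hdisj _ _ hne
      rw [Set.eq_empty_iff_forall_notMem] at this
      exact this x ⟨hex.choose_spec, hx⟩
  have gfib_none : {x | g x = none} = R := by
    ext x
    simp only [Set.mem_setOf_eq, hg, hR]
    constructor
    · intro hx n hxn
      rw [dif_pos ⟨n, hxn⟩] at hx
      exact absurd hx (by simp)
    · intro hx
      rw [dif_neg (by push_neg; exact hx)]
  have hfib_some : ∀ n, {p | h p = some n} = col n \ D := by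
    intro n
    ext p
    simp only [Set.mem_setOf_eq, hh, Set.mem_diff, col]
    by_cases hp : p ∈ D
    · simp [hp]
    · simp [hp]
  have hfib_none : {p | h p = none} = D := by
    ext p
    simp only [Set.mem_setOf_eq, hh]
    by_cases hp : p ∈ D <;> simp [hp]
  have colD : ∀ n, col n ∩ D ⊆ {((n : ℕ), (0 : ℕ))} := by
    rintro n p ⟨hp1, r, hr, rfl⟩
    simp only [col, Set.mem_setOf_eq] at hp1
    simp [hp1]
  -- fiber equivalences
  have eRD : {x : ℕ // x ∈ R} ≃ {p : ℕ × ℕ // p ∈ D} :=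
    { toFun := fun x => ⟨(x.1, 0), ⟨x.1, x.2, rfl⟩⟩
      invFun := fun p => ⟨p.1.1, by obtain ⟨r, hr, he⟩ := p.2; rw [← he]; exact hr⟩
      left_inv := fun x => rfl
      right_inv := fun p => by
        apply Subtype.ext
        obtain ⟨r, hr, he⟩ := p.2
        simp [← he] }
  have eNone : {x : ℕ // g x = none} ≃ {p : ℕ × ℕ // h p = none} := by
    refine (Equiv.subtypeEquivRight ?_).trans (eRD.trans (Equiv.subtypeEquivRight ?_))
    · exact fun x => Set.ext_iff.mp gfib_none x
    · exact fun p => (Set.ext_iff.mp hfib_none p).symm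
  have eSome : ∀ n, {x : ℕ // g x = some n} ≃ {p : ℕ × ℕ // h p = some n} := by
    intro n
    have h1 : {x : ℕ // g x = some n} ≃ {x : ℕ // x ∈ A n} :=
      Equiv.subtypeEquivRight (fun x => Set.ext_iff.mp (gfib_some n) x)
    have h2 : {p : ℕ × ℕ // h p = some n} ≃ {p : ℕ × ℕ // p ∈ col n \ D} :=
      Equiv.subtypeEquivRight (fun p => Set.ext_iff.mp (hfib_some n) p)
    have hGinf : (col n \ D).Infinite := by
      have hcol : (col n \ {((n : ℕ), (0:ℕ))}).Infinite := by
        refine Set.Infinite.diff ?_ (Set.finite_singleton _)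
        refine Set.infinite_of_injective_forall_mem (f := fun k : ℕ => ((n : ℕ), k)) ?_ ?_
        · exact fun a b hab => (Prod.mk.injEq _ _ _ _ ▸ hab).2
        · intro k; simp [col]
      refine hcol.mono ?_
      intro p hp
      exact ⟨hp.1, fun hpD => hp.2 (colD n ⟨hp.1, hpD⟩)⟩
    haveI := (hinf n).to_subtype
    haveI := hGinf.to_subtype
    exact h1.trans ((Classical.choice nonempty_equiv_of_countable).trans h2.symm)
  set E : ∀ i : Option ℕ, {x : ℕ // g x = i} ≃ {p : ℕ × ℕ // h p = i} := fun i =>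
    Option.rec eNone eSome i with hE
  refine ⟨(Equiv.sigmaFiberEquiv g).symm.trans
      ((Equiv.sigmaCongrRight E).trans (Equiv.sigmaFiberEquiv h)), ?_⟩
  set ψ : ℕ ≃ ℕ × ℕ := (Equiv.sigmaFiberEquiv g).symm.trans
      ((Equiv.sigmaCongrRight E).trans (Equiv.sigmaFiberEquiv h)) with hψ
  have key : ∀ x, h (ψ x) = g x := fun x => (E (g x) ⟨x, rfl⟩).2
  have img_fib : ∀ (X : Set ℕ) (i : Option ℕ),
      (ψ '' X) ∩ {p | h p = i} = ψ '' (X ∩ {x | g x = i}) := by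
    intro X i
    ext p
    constructor
    · rintro ⟨⟨x, hx, rfl⟩, hp⟩
      exact ⟨x, ⟨hx, by rw [Set.mem_setOf_eq, ← key x]; exact hp⟩, rfl⟩
    · rintro ⟨x, ⟨hx, hgi⟩, rfl⟩
      exact ⟨⟨x, hx, rfl⟩, by rw [Set.mem_setOf_eq, key x]; exact hgi⟩
  intro X
  constructor
  · intro hfin m
    have h1 : (ψ '' X) ∩ (col m \ D) = ψ '' (X ∩ A m) := by
      rw [← hfib_some, img_fib, gfib_some]
    have h2 : ((ψ '' X) ∩ (col m \ D)).Finite := by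
      rw [h1]; exact (hfin m).image _
    refine (h2.union (Set.finite_singleton ((m : ℕ), (0 : ℕ)))).subset ?_
    intro p hp
    by_cases hpD : p ∈ D
    · exact Or.inr (colD m ⟨hp.2, hpD⟩)
    · exact Or.inl ⟨hp.1, hp.2, hpD⟩
  · intro hfin n
    have h1 : (ψ '' X) ∩ (col n \ D) = ψ '' (X ∩ A n) := by
      rw [← hfib_some, img_fib, gfib_some]
    have h2 : (ψ '' (X ∩ A n)).Finite := by
      rw [← h1]
      exact (hfin n).subset (Set.inter_subset_inter_right _ Set.diff_subset)
    exact Set.Finite.of_finite_image h2 (Set.injOn_of_injective ψ.injective)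

/-- Restrict an order isomorphism to subsets that correspond. -/
def OrderIso.restrictSet {α β : Type*} [Preorder α] [Preorder β] (e : α ≃o β) (I : Set α)
    (J : Set β) (h : ∀ x, x ∈ I ↔ e x ∈ J) : ↥I ≃o ↥J where
  toFun x := ⟨e x, (h x).mp x.2⟩
  invFun y := ⟨e.symm y, (h _).mpr (by rw [e.apply_symm_apply]; exact y.2)⟩
  left_inv x := Subtype.ext (e.symm_apply_apply x)
  right_inv y := Subtype.ext (e.apply_symm_apply y)
  map_rel_iff' := by
    intro a b
    simp only [Equiv.coe_fn_mk, Subtype.mk_le_mk]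
    exact ⟨fun hab => Subtype.coe_le_coe.mp (e.le_iff_le.mp hab),
      fun hab => e.le_iff_le.mpr (Subtype.coe_le_coe.mpr hab)⟩

lemma exists_mem_iff_iso {I : Set (PowFin ℕ)} (hI : CtblyCogen I) :
    ∃ ψ : ℕ ≃ (ℕ × ℕ), ∀ x, x ∈ I ↔ powFinOrderIso ψ x ∈ LIdeal := by
  obtain ⟨A, hinf, hdisj, hmem⟩ := cogen_exists_disjoint_family hI
  obtain ⟨ψ, hψ⟩ := exists_equiv_to_cols A hinf hdisj
  refine ⟨ψ, fun x => ?_⟩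
  obtain ⟨X, rfl⟩ := clsFin_surjective x
  rw [powFinOrderIso_clsFin, hmem, mem_LIdeal_iff]
  exact hψ X

lemma part2iso (I : Set (PowFin ℕ)) (hI : CtblyCogen I) : Nonempty ((↥I) ≃o (↥LIdeal)) := by
  obtain ⟨ψ, h⟩ := exists_mem_iff_iso hI
  exact ⟨(powFinOrderIso ψ).restrictSet I LIdeal h⟩

/-- From eventually dominating function to `Lf` comparison. -/
lemma Lf_le_of_dom {f d : ℕ → ℕ} (h : ∀ᶠ n in Filter.atTop, f n < d n) :
    clsFin (Lf f) ≤ clsFin (Lf d) := by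
  rw [clsFin_le_iff]
  obtain ⟨N, hN⟩ := Filter.eventually_atTop.mp h
  refine ((Set.finite_Iio N).prod (Set.finite_Iic ((Finset.range N).sup f))).subset ?_
  rintro ⟨m, n⟩ ⟨h1, h2⟩
  simp only [Lf, Set.mem_setOf_eq, not_le] at h1 h2
  have hm : m < N := by
    by_contra hmc
    have := hN m (Nat.le_of_not_lt hmc)
    omega
  exact ⟨hm, h1.trans (Finset.le_sup (Finset.mem_range.mpr hm))⟩

/-- From `Lf` comparison to eventual domination. -/
lemma dom_of_Lf_le {f d : ℕ → ℕ} (h : clsFin (Lf f) ≤ clsFin (Lf d)) :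
    ∀ᶠ n in Filter.atTop, f n < d n + 1 := by
  rw [clsFin_le_iff] at h
  have hfin : {m | d m < f m}.Finite := by
    apply Set.Finite.of_finite_image (f := fun m => (m, f m))
    · refine h.subset ?_
      rintro p ⟨m, hm, rfl⟩
      simp only [Set.mem_setOf_eq] at hm
      refine ⟨by simp [Lf], ?_⟩
      simp only [Lf, Set.mem_setOf_eq, not_le]
      omega
    · exact fun x _ y _ hxy => (Prod.mk.injEq _ _ _ _ ▸ hxy).1
  obtain ⟨N, hN⟩ := hfin.bddAbove
  rw [Filter.eventually_atTop]
  refine ⟨N + 1, fun m hm => ?_⟩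
  have : ¬ d m < f m := fun hc => by
    have := hN hc
    omega
  omega

lemma dNum_eq_LIdeal_cofinality :
    dNum = sInf {κ | ∃ C : Set (PowFin (ℕ × ℕ)), C ⊆ LIdeal ∧ Cardinal.mk C = κ ∧
      ∀ x ∈ LIdeal, ∃ c ∈ C, x ≤ c} := by
  apply le_antisymm
  · -- dNum ≤ : from a cofinal family get a dominating family
    set S := {κ | ∃ C : Set (PowFin (ℕ × ℕ)), C ⊆ LIdeal ∧ Cardinal.mk C = κ ∧
      ∀ x ∈ LIdeal, ∃ c ∈ C, x ≤ c} with hS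
    have hSne : S.Nonempty := by
      refine ⟨Cardinal.mk LIdeal, LIdeal, le_refl _, rfl, fun x hx => ⟨x, hx, le_refl _⟩⟩
    obtain ⟨C, hCsub, hCmk, hCcof⟩ := csInf_mem hSne
    choose F hF using fun c : ↥C => (hCsub c.2 : c.1 ∈ LIdeal)
    set D := Set.range (fun c : ↥C => fun m => F c m + 1) with hDdef
    have hdom : ∀ g : ℕ → ℕ, ∃ d ∈ D, ∀ᶠ n in Filter.atTop, g n < d n := by
      intro g
      obtain ⟨c, hc, hle⟩ := hCcof (clsFin (Lf g)) ⟨g, le_refl _⟩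
      refine ⟨fun m => F ⟨c, hc⟩ m + 1, ⟨⟨c, hc⟩, rfl⟩, ?_⟩
      exact dom_of_Lf_le (le_trans hle (hF ⟨c, hc⟩))
    calc dNum ≤ Cardinal.mk D := csInf_le (OrderBot.bddBelow _) ⟨D, rfl, hdom⟩
      _ ≤ Cardinal.mk ↥C := Cardinal.mk_range_le
      _ = sInf S := hCmk
  · -- ≥ : from a dominating family get a cofinal family
    set T := {κ | ∃ D : Set (ℕ → ℕ), Cardinal.mk D = κ ∧
      ∀ g : ℕ → ℕ, ∃ d ∈ D, ∀ᶠ n in Filter.atTop, g n < d n} with hT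
    have hTne : T.Nonempty :=
      ⟨Cardinal.mk (Set.univ : Set (ℕ → ℕ)), Set.univ, rfl, fun g =>
        ⟨fun n => g n + 1, Set.mem_univ _, Filter.Eventually.of_forall (fun n => Nat.lt_succ_self _)⟩⟩
    obtain ⟨D, hDmk, hDdom⟩ := csInf_mem hTne
    set C := (fun d => clsFin (Lf d)) '' D with hC
    have hsub : C ⊆ LIdeal := by rintro x ⟨d, _, rfl⟩; exact ⟨d, le_refl _⟩
    have hcof : ∀ x ∈ LIdeal, ∃ c ∈ C, x ≤ c := by
      rintro x ⟨f, hf⟩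
      obtain ⟨d, hd, hdm⟩ := hDdom f
      exact ⟨clsFin (Lf d), ⟨d, hd, rfl⟩, le_trans hf (Lf_le_of_dom hdm)⟩
    refine le_trans (csInf_le (OrderBot.bddBelow _) ⟨C, hsub, rfl, hcof⟩) ?_
    have hdT : dNum = sInf T := rfl
    rw [hdT, ← hDmk]
    exact Cardinal.mk_image_le

lemma cofinal_cards_subset {α β : Type} [Preorder α] [Preorder β] {I : Set α} {J : Set β}
    (e : ↥I ≃o ↥J) :
    {κ : Cardinal | ∃ C : Set α, C ⊆ I ∧ Cardinal.mk C = κ ∧ ∀ x ∈ I, ∃ c ∈ C, x ≤ c} ⊆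
    {κ : Cardinal | ∃ C : Set β, C ⊆ J ∧ Cardinal.mk C = κ ∧ ∀ x ∈ J, ∃ c ∈ C, x ≤ c} := by
  rintro κ ⟨C, hCI, rfl, hcof⟩
  set C₀ : Set ↥I := Subtype.val ⁻¹' C with hC₀
  have hmk₀ : Cardinal.mk ↥C₀ = Cardinal.mk ↥C := by
    apply Cardinal.mk_preimage_of_injective_of_subset_range _ _ Subtype.val_injective
    rw [Subtype.range_coe]
    exact hCI
  set C' : Set β := Subtype.val '' (⇑e '' C₀) with hC'
  refine ⟨C', ?_, ?_, ?_⟩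
  · rintro y ⟨z, _, rfl⟩
    exact z.2
  · rw [hC', Cardinal.mk_image_eq Subtype.val_injective,
      Cardinal.mk_image_eq (show Function.Injective (⇑e) from fun a b hab =>
        e.toEquiv.injective hab), hmk₀]
  · intro x hx
    obtain ⟨c, hc, hle⟩ := hcof (e.symm ⟨x, hx⟩).1 (e.symm ⟨x, hx⟩).2
    set c₀ : ↥I := ⟨c, hCI hc⟩ with hc₀
    have h1 : e.symm ⟨x, hx⟩ ≤ c₀ := Subtype.coe_le_coe.mp hle
    have h2 : (⟨x, hx⟩ : ↥J) ≤ e c₀ := by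
      rw [← e.apply_symm_apply ⟨x, hx⟩]
      exact e.le_iff_le.mpr h1
    exact ⟨(e c₀).1, ⟨e c₀, ⟨c₀, hc, rfl⟩, rfl⟩, Subtype.coe_le_coe.mpr h2⟩

lemma part3 : ∀ I : Set (PowFin ℕ), CtblyCogen I →
    dNum = sInf {κ | ∃ C : Set (PowFin ℕ), C ⊆ I ∧ Cardinal.mk C = κ ∧
      ∀ x ∈ I, ∃ c ∈ C, x ≤ c} := by
  intro I hI
  obtain ⟨e⟩ := part2iso I hI
  have hsets : {κ | ∃ C : Set (PowFin ℕ), C ⊆ I ∧ Cardinal.mk C = κ ∧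
      ∀ x ∈ I, ∃ c ∈ C, x ≤ c} =
      {κ | ∃ C : Set (PowFin (ℕ × ℕ)), C ⊆ LIdeal ∧ Cardinal.mk C = κ ∧
      ∀ x ∈ LIdeal, ∃ c ∈ C, x ≤ c} :=
    Set.Subset.antisymm (cofinal_cards_subset e) (cofinal_cards_subset e.symm)
  rw [hsets]
  exact dNum_eq_LIdeal_cofinality

/-- (1) For `a ⊆ ω×ω`, if `g` is a function whose graph is contained in `a` (defined on
`dom a = {m : ∃ n, (m,n) ∈ a}`) and `a ∩ L_f` is finite, then `g(m) > f(m)` for all but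
finitely many `m ∈ dom a`.
(2) The ideal `LIdeal` generated by the `L_f` is countably co-generated and
nonprincipal, and every countably co-generated nonprincipal ideal of `P(ω)/fin` is
order-isomorphic to it.
(3) `𝔡` equals the minimum cardinality of a cofinal subset of any countably
co-generated nonprincipal ideal of `P(ω)/fin`. -/
theorem Lf_characterization_and_d :
    (∀ (f : ℕ → ℕ) (a : Set (ℕ × ℕ)) (g : ℕ → ℕ),
      (∀ m ∈ {m | ∃ n, (m, n) ∈ a}, (m, g m) ∈ a) → (a ∩ Lf f).Finite →
      {m ∈ {m | ∃ n, (m, n) ∈ a} | ¬ f m < g m}.Finite) ∧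
    (CtblyCogen LIdeal ∧
      ∀ I : Set (PowFin ℕ), CtblyCogen I → Nonempty ((↥I) ≃o (↥LIdeal))) ∧
    (∀ I : Set (PowFin ℕ), CtblyCogen I →
      dNum = sInf {κ | ∃ C : Set (PowFin ℕ), C ⊆ I ∧ Cardinal.mk C = κ ∧
        ∀ x ∈ I, ∃ c ∈ C, x ≤ c}) := by
  exact ⟨part1, ⟨ctblyCogen_LIdeal, part2iso⟩, part3⟩
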